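/- For every H ∈ [1/2, 1) and every x ∈ [0,1], one has R_H(x) ≥ x²(1−x²)(1−H)((2H−1)(1−x) + 2), where R_H(x) = 1 − 2Hx − (1−x)^{2H}(1−x²) + 2Hx^{2H+1} − x^{2+2H}. -/

import Mathlib

open Real

/-- First-order Bernoulli: `t^p ≤ 1 - p*(1-t)` for `t ≥ 0`, `p ∈ [0,1]`. -/
lemma bern1 {p t : ℝ} (hp0 : 0 ≤ p) (hp1 : p ≤ 1) (ht0 : 0 ≤ t) :
    t ^ p ≤ 1 - p * (1 - t) := by
  have h := rpow_one_add_le_one_add_mul_self (s := t - 1) (by linarith) hp0 hp1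
  have e : (1 : ℝ) + (t - 1) = t := by ring
  rw [e] at h
  linarith

/-- Second-order Bernoulli: `t^b ≤ 1 - b*(1-t) - b*(1-b)/2*(1-t)^2` for `b, t ∈ [0,1]`. -/
lemma bern2 {b t : ℝ} (hb0 : 0 ≤ b) (hb1 : b ≤ 1) (ht0 : 0 ≤ t) (ht1 : t ≤ 1) :
    t ^ b ≤ 1 - b * (1 - t) - b * (1 - b) / 2 * (1 - t) ^ 2 := by
  rcases eq_or_lt_of_le hb0 with hb | hb
  · simp [← hb]
  rcases eq_or_lt_of_le ht0 with ht | ht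
  · rw [← ht, Real.zero_rpow (ne_of_gt hb)]
    nlinarith
  set g : ℝ → ℝ := fun y => 1 - b * (1 - y) - b * (1 - b) / 2 * (1 - y) ^ 2 - y ^ b with hg
  have hderiv : ∀ y : ℝ, 0 < y → HasDerivAt g (b + b * (1 - b) * (1 - y) - b * y ^ (b - 1)) y := by
    intro y hy
    have h1 : HasDerivAt (fun y : ℝ => y ^ b) (b * y ^ (b - 1)) y :=
      Real.hasDerivAt_rpow_const (Or.inl (ne_of_gt hy))
    have h3 : HasDerivAt (fun y : ℝ => 1 - y) (-1) y := by
      simpa using (hasDerivAt_id y).const_sub 1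
    have h2 := (((h3.const_mul b).const_sub 1).sub ((h3.pow 2).const_mul (b * (1 - b) / 2))).sub h1
    exact h2.congr_deriv (by push_cast; ring)
  have hcont : Continuous g := by
    have hc : Continuous fun y : ℝ => y ^ b := by
      apply continuous_iff_continuousAt.2
      intro y
      exact Real.continuousAt_rpow_const y b (Or.inr hb0)
    simp only [hg]
    fun_prop
  have hanti : AntitoneOn g (Set.Icc t 1) := by
    apply antitoneOn_of_deriv_nonpos (convex_Icc t 1) hcont.continuousOn
    · intro y hy
      rw [interior_Icc] at hy
      exact ((hderiv y (ht.trans hy.1)).differentiableAt).differentiableWithinAt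
    · intro y hy
      rw [interior_Icc] at hy
      have hy0 : 0 < y := ht.trans hy.1
      rw [(hderiv y hy0).deriv]
      have hkey : 1 + (1 - b) * (1 - y) ≤ y ^ (b - 1) := by
        have hbern : y ^ (1 - b) ≤ 1 - (1 - b) * (1 - y) := bern1 (by linarith) (by linarith) hy0.le
        have hpos : (0:ℝ) < y ^ (1 - b) := Real.rpow_pos_of_pos hy0 _
        have hrw : y ^ (b - 1) = (y ^ (1 - b))⁻¹ := by
          rw [← Real.rpow_neg hy0.le]
          norm_num
        have hc : (0:ℝ) ≤ 1 + (1 - b) * (1 - y) := by nlinarith [hy.1, hy.2]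
        have h2 : (1 + (1 - b) * (1 - y)) * y ^ (1 - b) ≤ 1 := by
          have h2' := mul_le_mul_of_nonneg_left hbern hc
          nlinarith [sq_nonneg ((1 - b) * (1 - y))]
        have h4 := mul_le_mul_of_nonneg_right h2 (le_of_lt (inv_pos.2 hpos))
        rw [mul_assoc, mul_inv_cancel₀ (ne_of_gt hpos), mul_one, one_mul] at h4
        rw [hrw]
        exact h4
      nlinarith [mul_le_mul_of_nonneg_left hkey hb0]
  have h1 : g 1 = 0 := by simp [hg]
  have h2 := hanti (Set.mem_Icc.2 ⟨le_refl t, ht1⟩) (Set.mem_Icc.2 ⟨ht1, le_refl 1⟩) ht1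
  rw [h1] at h2
  simp only [hg] at h2
  linarith

/-- The function `R_H` of formula (21). -/
noncomputable def RH (H x : ℝ) : ℝ :=
  1 - 2*H*x - (1-x) ^ (2*H) * (1 - x^2) + 2*H*x ^ (2*H+1) - x ^ (2+2*H)

/-- inequality (23): for `H ∈ [1/2, 1)` and `x ∈ [0,1]`,
`R_H(x) ≥ x²(1−x²)(1−H)((2H−1)(1−x) + 2)`. -/
theorem statement7 (H x : ℝ) (hH : H ∈ Set.Ico (1/2 : ℝ) 1) (hx : x ∈ Set.Icc (0:ℝ) 1) :
    x^2 * (1 - x^2) * (1 - H) * ((2*H - 1)*(1 - x) + 2) ≤ RH H x := by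
  obtain ⟨hH0, hH1⟩ := hH
  obtain ⟨hx0, hx1⟩ := hx
  have hb0 : (0:ℝ) ≤ 2*H - 1 := by linarith
  have hb1 : (2:ℝ)*H - 1 ≤ 1 := by linarith
  -- Bound A: (1-x)^(2H) ≤ (1-x)(1 - b x - b(1-b)/2 x²),  b = 2H-1
  have hA : (1-x) ^ (2*H) ≤ (1-x) * (1 - (2*H-1)*x - (2*H-1)*(1-(2*H-1))/2 * x^2) := by
    rcases eq_or_lt_of_le hx1 with h1 | h1
    · rw [h1]
      rw [show (1:ℝ) - 1 = 0 by ring, Real.zero_rpow (by linarith), zero_mul]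
    · have h1x : (0:ℝ) < 1 - x := by linarith
      conv_lhs => rw [show (2*H) = 1 + (2*H-1) by ring]
      rw [Real.rpow_add h1x, Real.rpow_one]
      have hber := bern2 hb0 hb1 h1x.le (by linarith : (1:ℝ) - x ≤ 1)
      have e2 : (1:ℝ) - (1 - x) = x := by ring
      rw [e2] at hber
      exact mul_le_mul_of_nonneg_left hber h1x.le
  -- Bound B: x³(1 + (2-2H)(1-x)) ≤ x^(2H+1)
  have hB : x^3 * (1 + (2-2*H)*(1-x)) ≤ x ^ (2*H+1) := by
    rcases eq_or_lt_of_le hx0 with h0 | h0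
    · rw [← h0, Real.zero_rpow (by linarith)]
      norm_num
    · have key : x ^ (2*H+1) * x ^ (2-2*H) = x^3 := by
        rw [← Real.rpow_add h0, show (2*H+1+(2-2*H)) = ((3:ℕ):ℝ) by push_cast; ring,
          Real.rpow_natCast]
      have hP : (0:ℝ) < x ^ (2-2*H) := Real.rpow_pos_of_pos h0 _
      have hPb : x ^ (2-2*H) ≤ 1 - (2-2*H)*(1-x) := bern1 (by linarith) (by linarith) hx0
      have hx3 : (0:ℝ) ≤ x^3 := by positivity
      have hprod : x^3 * (1 + (2-2*H)*(1-x)) * x ^ (2-2*H) ≤ x^3 := by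
        have hcn : (0:ℝ) ≤ x^3 * (1 + (2-2*H)*(1-x)) :=
          mul_nonneg hx3 (by nlinarith)
        have := mul_le_mul_of_nonneg_left hPb hcn
        nlinarith [sq_nonneg ((2-2*H)*(1-x)), hx3]
      have heq : x ^ (2*H+1) = x^3 / x ^ (2-2*H) := (eq_div_iff (ne_of_gt hP)).mpr key
      rw [heq, le_div_iff₀ hP]
      exact hprod
  -- Bound C: x^(2+2H) ≤ x³(1 - (2H-1)(1-x))
  have hC : x ^ (2+2*H) ≤ x^3 * (1 - (2*H-1)*(1-x)) := by
    rcases eq_or_lt_of_le hx0 with h0 | h0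
    · rw [← h0, Real.zero_rpow (by linarith)]
      norm_num
    · rw [show (2+2*H) = ((3:ℕ):ℝ) + (2*H-1) by push_cast; ring, Real.rpow_add h0,
        Real.rpow_natCast]
      exact mul_le_mul_of_nonneg_left (bern1 hb0 hb1 hx0) (by positivity)
  -- assemble
  have h1x2 : (0:ℝ) ≤ 1 - x^2 := by nlinarith
  have h1 := mul_le_mul_of_nonneg_right hA h1x2
  have h2 := mul_le_mul_of_nonneg_left hB (by linarith : (0:ℝ) ≤ 2*H)
  have hres : (0:ℝ) ≤ (2*H-1) * (1-(2*H-1)) * x^3 * (1-x) := by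
    apply mul_nonneg
    apply mul_nonneg
    apply mul_nonneg hb0 (by linarith)
    positivity
    linarith
  unfold RH
  nlinarith [h1, h2, hC, hres]
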